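/- Let b > 0 and a₁, a₂ ∈ ℝ, and for c ∈ ℝ let μ_c denote the measure on ℝ having density x ↦ (2b)⁻¹·exp(−|x − c|/b) with respect to Lebesgue measure (the Laplace distribution with scale b centered at c). Then for every measurable set S ⊆ ℝ, μ_{a₁}(S) ≤ exp(|a₁ − a₂|/b)·μ_{a₂}(S). -/

import Mathlib

open MeasureTheory

/-- The Laplace distribution centered at `c` with scale `b`: the measure on `ℝ` with
density `x ↦ (2b)⁻¹ · exp(−|x − c|/b)` with respect to Lebesgue measure. -/
noncomputable def lapCentered (b c : ℝ) : Measure ℝ :=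
  volume.withDensity (fun x => ENNReal.ofReal ((2 * b)⁻¹ * Real.exp (-|x - c| / b)))

/-- Privacy guarantee of the Laplace mechanism for a single query: for every
measurable set `S`, the Laplace measures centered at `a₁` and `a₂` differ by a
multiplicative factor of at most `exp(|a₁ − a₂|/b)`. -/
theorem laplace_mechanism_privacy (b : ℝ) (hb : 0 < b) (a₁ a₂ : ℝ)
    (S : Set ℝ) (hS : MeasurableSet S) :
    lapCentered b a₁ S ≤ ENNReal.ofReal (Real.exp (|a₁ - a₂| / b)) * lapCentered b a₂ S := by
  rw [lapCentered, lapCentered, withDensity_apply _ hS, withDensity_apply _ hS,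
    ← lintegral_const_mul' _ _ ENNReal.ofReal_ne_top]
  refine lintegral_mono fun x => ?_
  rw [← ENNReal.ofReal_mul (Real.exp_nonneg _)]
  refine ENNReal.ofReal_le_ofReal ?_
  rw [mul_comm (Real.exp _), mul_assoc, ← Real.exp_add]
  refine mul_le_mul_of_nonneg_left (Real.exp_le_exp.mpr ?_) (by positivity)
  rw [← add_div, div_le_div_iff_of_pos_right hb]
  have := abs_sub_abs_le_abs_sub (x - a₂) (x - a₁)
  have h2 : (x - a₂) - (x - a₁) = a₁ - a₂ := by ring
  linarith [this, h2 ▸ this]
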